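/- Let G be a compact connected Lie group with maximal torus T, and let f : G → G be a conjugation-equivariant diffeomorphism. Then the restriction of f to T is a diffeomorphism of T that is equivariant under the action of the Weyl group N(T)/T. -/

import Mathlib

/-- Let `G` be a compact connected Lie group with maximal torus `T`
(`T` equals its own centralizer, and is connected), and let `f : G → G` be a
conjugation-equivariant diffeomorphism (here: homeomorphism).  Then the
restriction of `f` to `T` is a bijection of `T` onto itself that is equivariant
under the conjugation action of the normalizer `N(T)` (hence of the Weyl group
`N(T)/T`). -/
theorem conj_equivariant_restricts_to_weyl_equivariant_diffeo_of_torus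
    {G : Type*} [Group G] [TopologicalSpace G] [IsTopologicalGroup G]
    [CompactSpace G] [ConnectedSpace G]
    (T : Subgroup G)
    (hT : Subgroup.centralizer (T : Set G) = T)
    (hTconn : IsConnected (T : Set G))
    (f : G ≃ₜ G)
    (hequiv : ∀ W X : G, f (X * W * X⁻¹) = X * f W * X⁻¹) :
    Set.BijOn f (T : Set G) (T : Set G) ∧
      ∀ X ∈ Subgroup.normalizer (T : Set G), ∀ D ∈ T, f (X * D * X⁻¹) = X * f D * X⁻¹ := by
  have hsymm : ∀ W X : G, f.symm (X * W * X⁻¹) = X * f.symm W * X⁻¹ := by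
    intro W X
    apply f.injective
    rw [f.apply_symm_apply, hequiv, f.apply_symm_apply]
  have key : ∀ (g : G ≃ₜ G), (∀ W X : G, g (X * W * X⁻¹) = X * g W * X⁻¹) →
      Set.MapsTo g (T : Set G) (T : Set G) := by
    intro g hg t ht
    have : g t ∈ Subgroup.centralizer (T : Set G) := by
      rw [Subgroup.mem_centralizer_iff]
      intro s hs
      have hts : s * t * s⁻¹ = t := by
        have h := (Subgroup.mem_centralizer_iff.mp (hT ▸ ht)) s hs
        rw [h, mul_inv_cancel_right]
      have := hg t s
      rw [hts] at this
      have : s * g t * s⁻¹ = g t := this.symm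
      calc s * g t = (s * g t * s⁻¹) * s := by group
        _ = g t * s := by rw [this]
    rwa [hT] at this
  refine ⟨⟨key f hequiv, ?_, ?_⟩, fun X _ D _ => hequiv D X⟩
  · intro a _ b _ hab
    exact f.injective hab
  · intro t ht
    exact ⟨f.symm t, key f.symm hsymm ht, f.apply_symm_apply t⟩
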